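/- Curvature along rays: if (x(t), ξ(t)) is a C¹ solution of ẋ = -√(1 + A cos²(πx)) cos(ξ/2), ξ̇ = -Aπ (sin(2πx)/√(1 + A cos²(πx))) sin(ξ/2), then x is C² and ẍ(t) = -(Aπ/2) sin(2πx(t)). Consequently, |ẍ| is nondecreasing in A ≥ 0 pointwise in x. -/

import Mathlib

/-- Curvature along rays: if `(x(t), ξ(t))` solves
`ẋ = -√(1 + A cos²(πx)) cos(ξ/2)`, `ξ̇ = -Aπ (sin(2πx)/√(1 + A cos²(πx))) sin(ξ/2)`,
then `x` is twice differentiable with `ẍ = -(Aπ/2) sin(2πx)`; consequently `|ẍ|` is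
pointwise nondecreasing in `A ≥ 0`. -/
theorem stmt_12 (A : ℝ) (hA : 0 ≤ A) (x ξ : ℝ → ℝ)
    (hx : ∀ t : ℝ, HasDerivAt x
      (-Real.sqrt (1 + A * Real.cos (Real.pi * x t) ^ 2) * Real.cos (ξ t / 2)) t)
    (hξ : ∀ t : ℝ, HasDerivAt ξ
      (-(A * Real.pi) * (Real.sin (2 * Real.pi * x t)
          / Real.sqrt (1 + A * Real.cos (Real.pi * x t) ^ 2)) * Real.sin (ξ t / 2)) t) :
    (∀ t : ℝ, HasDerivAt (deriv x)
        (-(A * Real.pi / 2) * Real.sin (2 * Real.pi * x t)) t)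
    ∧ ∀ (A₁ A₂ z : ℝ), A₁ ≥ A₂ → A₂ ≥ 0 →
        |-(A₁ * Real.pi / 2) * Real.sin (2 * Real.pi * z)|
          ≥ |-(A₂ * Real.pi / 2) * Real.sin (2 * Real.pi * z)| := by
  constructor
  · intro t
    have hderiv : deriv x = fun t =>
        -Real.sqrt (1 + A * Real.cos (Real.pi * x t) ^ 2) * Real.cos (ξ t / 2) :=
      funext fun t => (hx t).deriv
    rw [hderiv]
    have hpos : (0:ℝ) < 1 + A * Real.cos (Real.pi * x t) ^ 2 := by
      nlinarith [sq_nonneg (Real.cos (Real.pi * x t)), mul_nonneg hA (sq_nonneg (Real.cos (Real.pi * x t)))]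
    have hS : Real.sqrt (1 + A * Real.cos (Real.pi * x t) ^ 2) ≠ 0 :=
      (Real.sqrt_pos.mpr hpos).ne'
    have hSq : Real.sqrt (1 + A * Real.cos (Real.pi * x t) ^ 2) ^ 2
        = 1 + A * Real.cos (Real.pi * x t) ^ 2 := Real.sq_sqrt hpos.le
    have h1 := (hx t).const_mul Real.pi
    have h2 := h1.cos
    have h3 := h2.pow 2
    have h4 := (h3.const_mul A).const_add 1
    have hsqrt := h4.sqrt hpos.ne'
    have hξ2 := (hξ t).div_const 2
    have hcos := hξ2.cos
    have hmul := hsqrt.neg.mul hcos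
    convert hmul using 1
    · rfl
    · rfl
    · rfl
    have h2x : (2:ℝ) * Real.pi * x t = 2 * (Real.pi * x t) := by ring
    rw [h2x, Real.sin_two_mul]
    have hpyth := Real.sin_sq_add_cos_sq (ξ t / 2)
    simp only [Pi.neg_apply, Pi.pow_apply]
    field_simp
    linear_combination (2 * A * Real.sin (Real.pi * x t) * Real.cos (Real.pi * x t)) * hpyth
  · intro A₁ A₂ z h1 h2
    rw [abs_mul, abs_mul]
    have hπ := Real.pi_pos
    apply mul_le_mul_of_nonneg_right _ (abs_nonneg _)
    rw [abs_neg, abs_neg, abs_of_nonneg (by positivity), abs_of_nonneg (by nlinarith)]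
    nlinarith
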